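/- Let R = ℤ[x₂,x₃] with deg x₂ = 2, deg x₃ = 3, and let J ⊆ R be the ideal generated by the elements of positive degree of the subring ℤ[2x₂, x₂², x₃²]. Then x₂x₃ ∉ J, but 2·(x₂x₃) ∈ J. -/

import Mathlib

open MvPolynomial

/-- The subring `ℤ[2x₂, x₂², x₃²]` of `R = ℤ[x₂,x₃]` (image of `CH(BG₂) → CH(BSL₃)`). -/
noncomputable def imBG2 : Subalgebra ℤ (MvPolynomial (Fin 2) ℤ) :=
  Algebra.adjoin ℤ ({2 * X 0, (X 0) ^ 2, (X 1) ^ 2} : Set (MvPolynomial (Fin 2) ℤ))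

/-- The ideal of `R = ℤ[x₂,x₃]` generated by the positive-degree elements (those with zero
constant term) of the subring `ℤ[2x₂, x₂², x₃²]`. -/
noncomputable def Jideal : Ideal (MvPolynomial (Fin 2) ℤ) :=
  Ideal.span {f : MvPolynomial (Fin 2) ℤ | f ∈ imBG2 ∧ constantCoeff f = 0}

noncomputable def Iideal : Ideal (MvPolynomial (Fin 2) ℤ) :=
  Ideal.span ({2 * X 0, (X 0) ^ 2, (X 1) ^ 2} : Set (MvPolynomial (Fin 2) ℤ))

lemma adjoin_sub_const (f : MvPolynomial (Fin 2) ℤ) (hf : f ∈ imBG2) :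
    f - C (constantCoeff f) ∈ Iideal := by
  refine Algebra.adjoin_induction ?_ ?_ ?_ ?_ hf
  · rintro x (rfl | rfl | rfl)
    · simpa [Iideal] using Ideal.subset_span (by simp : (2 * X 0 : MvPolynomial (Fin 2) ℤ) ∈ _)
    · simpa [Iideal] using Ideal.subset_span (by simp : ((X 0)^2 : MvPolynomial (Fin 2) ℤ) ∈ _)
    · simpa [Iideal] using Ideal.subset_span (by simp : ((X 1)^2 : MvPolynomial (Fin 2) ℤ) ∈ _)
  · intro r
    simp [algebraMap_eq]
  · intro x y hx hy ihx ihy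
    have : x + y - C (constantCoeff (x + y)) =
        (x - C (constantCoeff x)) + (y - C (constantCoeff y)) := by
      simp [map_add]; ring
    rw [this]; exact Ideal.add_mem _ ihx ihy
  · intro x y hx hy ihx ihy
    have : x * y - C (constantCoeff (x * y)) =
        x * (y - C (constantCoeff y)) + (x - C (constantCoeff x)) * C (constantCoeff y) := by
      simp [map_mul]; ring
    rw [this]
    exact Ideal.add_mem _ (Ideal.mul_mem_left _ _ ihy) (Ideal.mul_mem_right _ _ ihx)

lemma J_le_I : Jideal ≤ Iideal := by
  rw [Jideal, Ideal.span_le]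
  rintro f ⟨hf, hc⟩
  have := adjoin_sub_const f hf
  rwa [hc, map_zero, sub_zero] at this

/-- `x₂x₃ ∉ J` but `2·x₂x₃ ∈ J`: the class of `x₂x₃` is a nonzero `2`-torsion element of
degree `5` in `R/J = CH(GL₇/SL₃)`. -/
theorem torsion_element_x2x3 :
    X 0 * X 1 ∉ Jideal ∧ 2 * (X 0 * X 1) ∈ Jideal := by
  constructor
  · intro h
    have hI : (X 0 * X 1 : MvPolynomial (Fin 2) ℤ) ∈ Iideal := J_le_I h
    rw [Iideal, show ({2 * X 0, (X 0)^2, (X 1)^2} : Set (MvPolynomial (Fin 2) ℤ)) =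
      insert (2 * X 0) (insert ((X 0)^2) {(X 1)^2}) from rfl,
      Ideal.mem_span_insert] at hI
    obtain ⟨p, z, hz, hEq⟩ := hI
    rw [Ideal.mem_span_insert] at hz
    obtain ⟨q, w, hw, rfl⟩ := hz
    rw [Ideal.mem_span_singleton] at hw
    obtain ⟨r, rfl⟩ := hw
    have hEq' : (X 0 * X 1 : MvPolynomial (Fin 2) ℤ) =
        (p * 2) * X 0 + (q * X 0) * X 0 + (r * X 1) * X 1 := by linear_combination hEq
    have hc := congrArg (coeff (Finsupp.single 0 1 + Finsupp.single 1 1)) hEq'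
    simp only [coeff_add] at hc
    simp [coeff_mul_X', Finsupp.single_apply] at hc
    rw [mul_two, coeff_add] at hc
    omega
  · have h1 : (2 * X 0 : MvPolynomial (Fin 2) ℤ) ∈ Jideal := by
      apply Ideal.subset_span
      exact ⟨Algebra.subset_adjoin (by simp), by simp⟩
    have h2 := Ideal.mul_mem_left _ (X 1) h1
    have heq : (2 * (X 0 * X 1) : MvPolynomial (Fin 2) ℤ) = X 1 * (2 * X 0) := by ring
    rw [heq]; exact h2
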